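/- For every integer d ≥ 3, the function x ↦ [I₀(x/d)]^d e^{−x} is integrable on the interval (0, ∞); that is, the integral ∫₀^∞ [I₀(x/d)]^d e^{−x} dx is finite. -/

import Mathlib

set_option maxHeartbeats 1000000


open MeasureTheory

/-- The modified Bessel function of the first kind of order zero,
`I₀(x) = ∑_{k ≥ 0} (x/2)^{2k} / (k!)²`. -/
noncomputable def besselI0 (x : ℝ) : ℝ :=
  ∑' k : ℕ, (x / 2) ^ (2 * k) / ((k.factorial : ℝ)) ^ 2

lemma besselI0_term_nonneg (y : ℝ) (k : ℕ) :
    0 ≤ (y / 2) ^ (2 * k) / ((k.factorial : ℝ)) ^ 2 := by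
  have : (y / 2) ^ (2 * k) = ((y / 2) ^ 2) ^ k := by rw [pow_mul]
  rw [this]
  positivity

lemma summable_besselI0 (y : ℝ) :
    Summable (fun k : ℕ => (y / 2) ^ (2 * k) / ((k.factorial : ℝ)) ^ 2) := by
  refine Summable.of_nonneg_of_le (besselI0_term_nonneg y) (fun k => ?_)
    (Real.summable_pow_div_factorial ((y / 2) ^ 2))
  rw [pow_mul]
  have h1 : (1 : ℝ) ≤ (k.factorial : ℝ) := by exact_mod_cast k.factorial_pos
  have h2 : (k.factorial : ℝ) ≤ ((k.factorial : ℝ)) ^ 2 := by nlinarith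
  gcongr

lemma besselI0_nonneg (y : ℝ) : 0 ≤ besselI0 y :=
  tsum_nonneg (besselI0_term_nonneg y)

/-- `(3n+1) * centralBinom n ^ 2 ≤ 16 ^ n` over ℝ. -/
lemma centralBinom_sq_le (n : ℕ) :
    (3 * (n : ℝ) + 1) * ((n.centralBinom : ℝ)) ^ 2 ≤ 16 ^ n := by
  induction n with
  | zero => simp [Nat.centralBinom]
  | succ n ih =>
    have h : ((n : ℝ) + 1) * ((n + 1).centralBinom : ℝ)
        = 2 * (2 * (n : ℝ) + 1) * (n.centralBinom : ℝ) := by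
      exact_mod_cast Nat.succ_mul_centralBinom_succ n
    have hc : (0 : ℝ) ≤ (n.centralBinom : ℝ) := Nat.cast_nonneg _
    have hn1 : (0 : ℝ) < ((n : ℝ) + 1) ^ 2 := by positivity
    have e1 : ((n : ℝ) + 1) ^ 2 * ((n + 1).centralBinom : ℝ) ^ 2
        = 4 * (2 * (n : ℝ) + 1) ^ 2 * (n.centralBinom : ℝ) ^ 2 := by
      calc ((n : ℝ) + 1) ^ 2 * ((n + 1).centralBinom : ℝ) ^ 2
          = (((n : ℝ) + 1) * ((n + 1).centralBinom : ℝ)) ^ 2 := by ring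
        _ = (2 * (2 * (n : ℝ) + 1) * (n.centralBinom : ℝ)) ^ 2 := by rw [h]
        _ = 4 * (2 * (n : ℝ) + 1) ^ 2 * (n.centralBinom : ℝ) ^ 2 := by ring
    have c1 : 4 * (3 * (n : ℝ) + 4) * (2 * (n : ℝ) + 1) ^ 2 * (n.centralBinom : ℝ) ^ 2
        ≤ 16 * ((n : ℝ) + 1) ^ 2 * ((3 * (n : ℝ) + 1) * (n.centralBinom : ℝ) ^ 2) := by
      nlinarith [sq_nonneg ((n.centralBinom : ℝ)), sq_nonneg ((n : ℝ))]
    have c2 : 16 * ((n : ℝ) + 1) ^ 2 * ((3 * (n : ℝ) + 1) * (n.centralBinom : ℝ) ^ 2)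
        ≤ 16 * ((n : ℝ) + 1) ^ 2 * (16 ^ n) := by
      apply mul_le_mul_of_nonneg_left ih (by positivity)
    have key : ((n : ℝ) + 1) ^ 2 * ((3 * ((n : ℝ) + 1) + 1) * ((n + 1).centralBinom : ℝ) ^ 2)
        ≤ ((n : ℝ) + 1) ^ 2 * 16 ^ (n + 1) := by
      calc ((n : ℝ) + 1) ^ 2 * ((3 * ((n : ℝ) + 1) + 1) * ((n + 1).centralBinom : ℝ) ^ 2)
          = (3 * (n : ℝ) + 4) * (((n : ℝ) + 1) ^ 2 * ((n + 1).centralBinom : ℝ) ^ 2) := by ring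
        _ = 4 * (3 * (n : ℝ) + 4) * (2 * (n : ℝ) + 1) ^ 2 * (n.centralBinom : ℝ) ^ 2 := by
            rw [e1]; ring
        _ ≤ 16 * ((n : ℝ) + 1) ^ 2 * (16 ^ n) := c1.trans c2
        _ = ((n : ℝ) + 1) ^ 2 * 16 ^ (n + 1) := by ring
    have := le_of_mul_le_mul_left key hn1
    push_cast at this ⊢
    linarith


lemma cb_eq_sum (n : ℕ) :
    n.centralBinom = ∑ kl ∈ Finset.HasAntidiagonal.antidiagonal n, n.choose kl.1 ^ 2 := by
  rw [Nat.centralBinom, two_mul, Nat.add_choose_eq]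
  refine Finset.sum_congr rfl fun kl hkl => ?_
  have h := Finset.HasAntidiagonal.mem_antidiagonal.mp hkl
  have h1 : kl.1 ≤ n := by omega
  have h2 : n.choose kl.2 = n.choose kl.1 := by
    rw [← Nat.choose_symm h1]; congr 1; omega
  rw [h2, sq]

lemma antidiagonal_term (y : ℝ) (n : ℕ) :
    ∑ kl ∈ Finset.HasAntidiagonal.antidiagonal n,
        ((y / 2) ^ (2 * kl.1) / ((kl.1.factorial : ℝ)) ^ 2) *
          ((y / 2) ^ (2 * kl.2) / ((kl.2.factorial : ℝ)) ^ 2)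
      = (n.centralBinom : ℝ) * (y / 2) ^ (2 * n) / ((n.factorial : ℝ)) ^ 2 := by
  have step : ∀ kl ∈ Finset.HasAntidiagonal.antidiagonal n,
      ((y / 2) ^ (2 * kl.1) / ((kl.1.factorial : ℝ)) ^ 2) *
          ((y / 2) ^ (2 * kl.2) / ((kl.2.factorial : ℝ)) ^ 2)
        = (n.choose kl.1 : ℝ) ^ 2 * ((y / 2) ^ (2 * n) / ((n.factorial : ℝ)) ^ 2) := by
    intro kl hkl
    have h := Finset.HasAntidiagonal.mem_antidiagonal.mp hkl
    have h1 : kl.1 ≤ n := by omega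
    have hfac : (n.factorial : ℝ)
        = (n.choose kl.1 : ℝ) * (kl.1.factorial : ℝ) * (kl.2.factorial : ℝ) := by
      have := Nat.choose_mul_factorial_mul_factorial h1
      have hsub : n - kl.1 = kl.2 := by omega
      rw [hsub] at this
      exact_mod_cast this.symm
    have hp : (y / 2) ^ (2 * kl.1) * (y / 2) ^ (2 * kl.2) = (y / 2) ^ (2 * n) := by
      rw [← pow_add]; congr 1; omega
    have hc : (0 : ℝ) < (n.choose kl.1 : ℝ) := by
      exact_mod_cast Nat.choose_pos h1
    have hk1 : (0 : ℝ) < (kl.1.factorial : ℝ) := by exact_mod_cast kl.1.factorial_pos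
    have hk2 : (0 : ℝ) < (kl.2.factorial : ℝ) := by exact_mod_cast kl.2.factorial_pos
    rw [div_mul_div_comm, hp, hfac]
    field_simp
  rw [Finset.sum_congr rfl step, ← Finset.sum_mul]
  rw [show ∑ kl ∈ Finset.HasAntidiagonal.antidiagonal n, (n.choose kl.1 : ℝ) ^ 2 = (n.centralBinom : ℝ) by
    rw [cb_eq_sum]; push_cast; ring]
  ring

lemma summable_norm_besselI0 (y : ℝ) :
    Summable (fun k : ℕ => ‖(y / 2) ^ (2 * k) / ((k.factorial : ℝ)) ^ 2‖) :=
  (summable_besselI0 y).congr fun k => by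
    rw [Real.norm_eq_abs, abs_of_nonneg (besselI0_term_nonneg y k)]

lemma besselI0_sq (y : ℝ) :
    besselI0 y ^ 2
      = ∑' n : ℕ, (n.centralBinom : ℝ) * (y / 2) ^ (2 * n) / ((n.factorial : ℝ)) ^ 2 := by
  rw [sq, besselI0,
    tsum_mul_tsum_eq_tsum_sum_antidiagonal_of_summable_norm (summable_norm_besselI0 y)
      (summable_norm_besselI0 y)]
  exact tsum_congr (antidiagonal_term y)

lemma summable_sq (y : ℝ) :
    Summable (fun n : ℕ => (n.centralBinom : ℝ) * (y / 2) ^ (2 * n) / ((n.factorial : ℝ)) ^ 2) :=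
  ((summable_norm_sum_mul_antidiagonal_of_summable_norm (summable_norm_besselI0 y)
    (summable_norm_besselI0 y)).of_norm).congr (antidiagonal_term y)

lemma exp_tsum (x : ℝ) : Real.exp x = ∑' n : ℕ, x ^ n / (n.factorial : ℝ) := by
  rw [Real.exp_eq_exp_ℝ, NormedSpace.exp_eq_tsum_div]

lemma key_ineq (y : ℝ) (hy : 0 ≤ y) :
    (1 + y) * besselI0 y ^ 2 ≤ Real.exp (2 * y) := by
  have hinj1 : Function.Injective (fun k : ℕ => 2 * k) := fun a b h => by simp only at h; omega
  have hinj2 : Function.Injective (fun k : ℕ => 2 * k + 1) := fun a b h => by simp only at h; omega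
  have heven : Summable (fun k : ℕ => (2 * y) ^ (2 * k) / (((2 * k).factorial : ℝ))) :=
    ((Real.summable_pow_div_factorial (2 * y)).comp_injective hinj1).congr fun k => rfl
  have hodd : Summable (fun k : ℕ => (2 * y) ^ (2 * k + 1) / (((2 * k + 1).factorial : ℝ))) :=
    ((Real.summable_pow_div_factorial (2 * y)).comp_injective hinj2).congr fun k => rfl
  have hexp : Real.exp (2 * y)
      = (∑' k : ℕ, (2 * y) ^ (2 * k) / (((2 * k).factorial : ℝ)))
        + ∑' k : ℕ, (2 * y) ^ (2 * k + 1) / (((2 * k + 1).factorial : ℝ)) := by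
    rw [exp_tsum]
    exact (tsum_even_add_odd (f := fun m => (2 * y) ^ m / (m.factorial : ℝ)) heven hodd).symm
  have hg := summable_sq y
  rw [besselI0_sq, hexp]
  have expand : (1 + y) * ∑' n : ℕ, (n.centralBinom : ℝ) * (y / 2) ^ (2 * n) / ((n.factorial : ℝ)) ^ 2
      = (∑' n : ℕ, (n.centralBinom : ℝ) * (y / 2) ^ (2 * n) / ((n.factorial : ℝ)) ^ 2)
        + ∑' n : ℕ, y * ((n.centralBinom : ℝ) * (y / 2) ^ (2 * n) / ((n.factorial : ℝ)) ^ 2) := by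
    rw [tsum_mul_left]; ring
  rw [expand]
  have hfacts : ∀ n : ℕ, ((2 * n).factorial : ℝ) = (n.centralBinom : ℝ) * ((n.factorial : ℝ)) ^ 2 := by
    intro n
    have := Nat.choose_mul_factorial_mul_factorial (Nat.le_mul_of_pos_left n (by norm_num : 0 < 2))
    have h2 : 2 * n - n = n := by omega
    rw [h2] at this
    have : n.centralBinom * n.factorial * n.factorial = (2 * n).factorial := by
      rw [Nat.centralBinom]; exact this
    rw [sq]
    exact_mod_cast (by rw [← this]; ring_nf : ((2 * n).factorial : ℕ) = n.centralBinom * (n.factorial * n.factorial))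
  have hcb2 : ∀ n : ℕ, ((n.centralBinom : ℝ)) ^ 2 ≤ 16 ^ n := by
    intro n
    have h0 := centralBinom_sq_le n
    nlinarith [sq_nonneg ((n.centralBinom : ℝ)), Nat.cast_nonneg (α := ℝ) n]
  have hcb3 : ∀ n : ℕ, (2 * (n : ℝ) + 1) * ((n.centralBinom : ℝ)) ^ 2 ≤ 2 * 16 ^ n := by
    intro n
    have h0 := centralBinom_sq_le n
    nlinarith [sq_nonneg ((n.centralBinom : ℝ)), Nat.cast_nonneg (α := ℝ) n]
  have e2 : ∀ n : ℕ, (y / 2) ^ (2 * n) = y ^ (2 * n) / 4 ^ n := by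
    intro n; rw [div_pow]; congr 1; rw [pow_mul]; norm_num
  have e3 : ∀ n : ℕ, (2 * y) ^ (2 * n) = 4 ^ n * y ^ (2 * n) := by
    intro n; rw [mul_pow, pow_mul]; norm_num
  have e16 : ∀ n : ℕ, (16 : ℝ) ^ n = 4 ^ n * 4 ^ n := by
    intro n; rw [← mul_pow]; norm_num
  refine add_le_add (Summable.tsum_le_tsum (fun n => ?_) hg heven)
    (Summable.tsum_le_tsum (fun n => ?_) (hg.mul_left y) hodd)
  · have hpos : (0 : ℝ) < ((2 * n).factorial : ℝ) := by exact_mod_cast (2 * n).factorial_pos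
    have hnf : (0 : ℝ) < ((n.factorial : ℝ)) ^ 2 := by
      have : (0 : ℝ) < (n.factorial : ℝ) := by exact_mod_cast n.factorial_pos
      positivity
    rw [div_le_div_iff₀ hnf hpos, hfacts n, e2 n, e3 n]
    have hmul := mul_le_mul_of_nonneg_right (hcb2 n)
      (show (0 : ℝ) ≤ y ^ (2 * n) * ((n.factorial : ℝ)) ^ 2 * ((n.factorial : ℝ)) ^ 2 / 4 ^ n by positivity)
    calc (n.centralBinom : ℝ) * (y ^ (2 * n) / 4 ^ n) * ((n.centralBinom : ℝ) * ((n.factorial : ℝ)) ^ 2)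
        = ((n.centralBinom : ℝ)) ^ 2 * (y ^ (2 * n) * ((n.factorial : ℝ)) ^ 2 * ((n.factorial : ℝ)) ^ 2 / 4 ^ n / ((n.factorial : ℝ)) ^ 2) := by
          field_simp
      _ ≤ 16 ^ n * (y ^ (2 * n) * ((n.factorial : ℝ)) ^ 2 * ((n.factorial : ℝ)) ^ 2 / 4 ^ n / ((n.factorial : ℝ)) ^ 2) := by
          gcongr
          exact hcb2 n
      _ = 4 ^ n * y ^ (2 * n) * ((n.factorial : ℝ)) ^ 2 := by
          rw [e16 n]; field_simp
  · have hpos : (0 : ℝ) < ((2 * n + 1).factorial : ℝ) := by exact_mod_cast (2 * n + 1).factorial_pos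
    have hnf : (0 : ℝ) < ((n.factorial : ℝ)) := by exact_mod_cast n.factorial_pos
    have h1' : ((2 * n + 1).factorial : ℝ) = (2 * (n : ℝ) + 1) * ((2 * n).factorial : ℝ) := by
      have := Nat.factorial_succ (2 * n)
      push_cast [this]; ring
    have lhs_eq : y * ((n.centralBinom : ℝ) * (y / 2) ^ (2 * n) / ((n.factorial : ℝ)) ^ 2)
        = (n.centralBinom : ℝ) * y ^ (2 * n + 1) / (4 ^ n * ((n.factorial : ℝ)) ^ 2) := by
      rw [e2 n]; field_simp; ring
    have e4 : (2 * y) ^ (2 * n + 1) = 2 * 4 ^ n * y ^ (2 * n + 1) := by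
      have h2 : (2 : ℝ) ^ (2 * n + 1) = 2 * 4 ^ n := by
        rw [pow_succ, pow_mul]; norm_num [mul_comm]
      rw [mul_pow, h2]
    rw [lhs_eq, div_le_div_iff₀ (by positivity) hpos, h1', hfacts n, e4]
    have hy' : (0 : ℝ) ≤ y ^ (2 * n + 1) * ((n.factorial : ℝ)) ^ 2 := by positivity
    calc (n.centralBinom : ℝ) * y ^ (2 * n + 1) * ((2 * (n : ℝ) + 1) * ((n.centralBinom : ℝ) * ((n.factorial : ℝ)) ^ 2))
        = ((2 * (n : ℝ) + 1) * ((n.centralBinom : ℝ)) ^ 2) * (y ^ (2 * n + 1) * ((n.factorial : ℝ)) ^ 2) := by ring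
      _ ≤ (2 * 16 ^ n) * (y ^ (2 * n + 1) * ((n.factorial : ℝ)) ^ 2) :=
          mul_le_mul_of_nonneg_right (hcb3 n) hy'
      _ = 2 * 4 ^ n * y ^ (2 * n + 1) * (4 ^ n * ((n.factorial : ℝ)) ^ 2) := by
          rw [e16 n]; ring

lemma measurable_besselI0 : Measurable besselI0 := by
  apply measurable_of_tendsto_metrizable
    (f := fun N (y : ℝ) => ∑ k ∈ Finset.range N, (y / 2) ^ (2 * k) / ((k.factorial : ℝ)) ^ 2)
  · intro N
    apply Finset.measurable_sum
    intro k _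
    exact (((measurable_id.div_const 2).pow_const _).div_const _)
  · rw [tendsto_pi_nhds]
    intro y
    exact (summable_besselI0 y).hasSum.tendsto_sum_nat

lemma t_props (y : ℝ) (hy : 0 ≤ y) :
    0 ≤ besselI0 y * Real.exp (-y) ∧ besselI0 y * Real.exp (-y) ≤ 1 ∧
      (besselI0 y * Real.exp (-y)) ^ 2 * (1 + y) ≤ 1 := by
  set t := besselI0 y * Real.exp (-y) with ht_def
  have ht0 : 0 ≤ t := mul_nonneg (besselI0_nonneg y) (Real.exp_pos _).le
  have h1y : (0 : ℝ) < 1 + y := by linarith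
  have hk := key_ineq y hy
  have e5 : Real.exp (-y) ^ 2 = Real.exp (-(2 * y)) := by
    rw [← Real.exp_nat_mul]; norm_num
  have e6 : Real.exp (2 * y) * Real.exp (-(2 * y)) = 1 := by
    rw [← Real.exp_add]; simp
  have hm := mul_le_mul_of_nonneg_right hk (Real.exp_pos (-(2 * y))).le
  have ht2 : t ^ 2 * (1 + y) ≤ 1 := by
    calc t ^ 2 * (1 + y) = (1 + y) * besselI0 y ^ 2 * Real.exp (-(2 * y)) := by
          rw [ht_def, mul_pow, e5]; ring
      _ ≤ Real.exp (2 * y) * Real.exp (-(2 * y)) := hm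
      _ = 1 := e6
  have ht1 : t ≤ 1 := by nlinarith [ht0, sq_nonneg (t - 1)]
  exact ⟨ht0, ht1, ht2⟩

/-- For every integer `d ≥ 3`, `x ↦ [I₀(x/d)]^d e^{-x}` is integrable on `(0, ∞)`. -/
theorem integrableOn_besselI0_pow_mul_exp (d : ℕ) (hd : 3 ≤ d) :
    IntegrableOn (fun x : ℝ => (besselI0 (x / d)) ^ d * Real.exp (-x)) (Set.Ioi 0) := by
  have hd0 : (0 : ℝ) < d := by exact_mod_cast (by omega : 0 < d)
  have hF_eq : ∀ x : ℝ, (besselI0 (x / d)) ^ d * Real.exp (-x)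
      = (besselI0 (x / d) * Real.exp (-(x / d))) ^ d := by
    intro x
    rw [mul_pow, ← Real.exp_nat_mul]
    congr 2
    field_simp
  have hFmeas : Measurable (fun x : ℝ => (besselI0 (x / d)) ^ d * Real.exp (-x)) :=
    ((measurable_besselI0.comp (measurable_id.div_const _)).pow_const d).mul
      (Real.measurable_exp.comp measurable_neg)
  rw [← Set.Ioc_union_Ioi_eq_Ioi (by norm_num : (0:ℝ) ≤ 1)]
  apply IntegrableOn.union
  · -- on (0, 1]: bounded by 1
    apply Integrable.mono' (g := fun _ : ℝ => (1 : ℝ))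
      (integrableOn_const measure_Ioc_lt_top.ne)
      hFmeas.aestronglyMeasurable
    rw [ae_restrict_iff' measurableSet_Ioc]
    filter_upwards with x hx
    have hy : (0 : ℝ) ≤ x / d := div_nonneg hx.1.le hd0.le
    obtain ⟨ht0, ht1, -⟩ := t_props (x / d) hy
    rw [Real.norm_eq_abs, hF_eq x, abs_of_nonneg (pow_nonneg ht0 d)]
    exact pow_le_one₀ ht0 ht1
  · -- on (1, ∞): bounded by d√d · x^(-3/2)
    apply Integrable.mono'
      (g := fun x : ℝ => (d : ℝ) * Real.sqrt d * x ^ (-(3 : ℝ)/2))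
      (((integrableOn_Ioi_rpow_of_lt (by norm_num : -(3:ℝ)/2 < -1) one_pos)).const_mul _)
      hFmeas.aestronglyMeasurable
    rw [ae_restrict_iff' measurableSet_Ioi]
    filter_upwards with x hx
    have hx1 : (1 : ℝ) < x := hx
    have hx0 : (0 : ℝ) < x := by linarith
    set y := x / d with hy_def
    have hy0 : 0 < y := div_pos hx0 hd0
    obtain ⟨ht0, ht1, ht2⟩ := t_props y hy0.le
    set t := besselI0 y * Real.exp (-y) with ht_def
    have h1y : (0 : ℝ) < 1 + y := by linarith
    -- t² ≤ 1/(1+y) ≤ 1/y = d/x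
    have ht2' : t ^ 2 ≤ d / x := by
      have h1 : t ^ 2 ≤ 1 / (1 + y) := by
        rw [le_div_iff₀ h1y]; exact ht2
      have h2 : 1 / (1 + y) ≤ 1 / y := by
        apply one_div_le_one_div_of_le hy0; linarith
      have h3 : 1 / y = d / x := by
        rw [hy_def]; field_simp
      linarith
    -- t ≤ √d/√x
    have hts : t ≤ Real.sqrt d / Real.sqrt x := by
      have h1 : t ≤ Real.sqrt (d / x) := by
        rw [← Real.sqrt_sq ht0]
        exact Real.sqrt_le_sqrt ht2'
      rwa [Real.sqrt_div hd0.le] at h1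
    have hdx : (0 : ℝ) ≤ d / x := div_nonneg hd0.le hx0.le
    have key3 : t ^ d ≤ (d / x) * (Real.sqrt d / Real.sqrt x) := by
      calc t ^ d ≤ t ^ 3 := pow_le_pow_of_le_one ht0 ht1 hd
        _ = t ^ 2 * t := by ring
        _ ≤ (d / x) * (Real.sqrt d / Real.sqrt x) := by
            apply mul_le_mul ht2' hts ht0 hdx
    rw [Real.norm_eq_abs, hF_eq x, abs_of_nonneg (pow_nonneg ht0 d)]
    refine key3.trans (le_of_eq ?_)
    have hrx : x ^ (-(3:ℝ)/2) = (x * Real.sqrt x)⁻¹ := by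
      rw [show -(3:ℝ)/2 = -(1 + 1/2) by norm_num, Real.rpow_neg hx0.le,
        Real.rpow_add hx0, Real.rpow_one, ← Real.sqrt_eq_rpow]
    rw [hrx]
    have hsx : (0 : ℝ) < Real.sqrt x := Real.sqrt_pos.2 hx0
    field_simp
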